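/- Let λ ∈ (−1/2, ∞) and 0 ≤ a < b < ∞, and let μ_λ be the measure on (a,b) with density x^{2λ} dx. Then for every Lipschitz function f on (a,b), the Poincaré-type inequality ⨍_a^b ⨍_a^b |f(x) − f(y)| dμ_λ(x) dμ_λ(y) ≤ 2(b−a) ⨍_a^b |f′(z)| dμ_λ(z) holds, where ⨍ denotes the average with respect to μ_λ. -/

import Mathlib

open Set MeasureTheory
open scoped ENNReal NNReal

lemma lip_deriv_bdd (g : ℝ → ℝ) (K : ℝ≥0) (hg : LipschitzWith K g) (t : ℝ) :
    |deriv g t| ≤ (K : ℝ) := by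
  simpa using norm_deriv_le_of_lipschitz hg (x₀ := t)

lemma lip_abs_deriv_integrableOn (g : ℝ → ℝ) (K : ℝ≥0) (hg : LipschitzWith K g)
    {s : Set ℝ} (hs : volume s ≠ ⊤) : IntegrableOn (fun t => |deriv g t|) s := by
  haveI : IsFiniteMeasure (volume.restrict s) :=
    ⟨by rw [Measure.restrict_apply_univ]; exact hs.lt_top⟩
  refine ⟨((measurable_deriv g).abs).aestronglyMeasurable, ?_⟩
  exact HasFiniteIntegral.of_bounded (C := (K : ℝ))
    (Filter.Eventually.of_forall (fun t => by simpa using lip_deriv_bdd g K hg t))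

lemma lip_sub_le_integral (g : ℝ → ℝ) (K : ℝ≥0) (hg : LipschitzWith K g)
    {u v : ℝ} (huv : u ≤ v) : g v - g u ≤ ∫ t in Ioc u v, |deriv g t| := by
  set h : ℝ → ℝ := fun t => (K : ℝ) * t - g t with hh
  have hmono : Monotone h := by
    intro s t hst
    have hd := hg.dist_le_mul s t
    rw [Real.dist_eq, Real.dist_eq, abs_sub_comm s t, abs_of_nonneg (sub_nonneg.2 hst)] at hd
    have h2 := (abs_le.1 hd).1
    simp only [h]
    linarith
  set S := hmono.stieltjesFunction with hS
  have hSe : ∀ x, S x = h x := by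
    intro x
    rw [hS, hmono.stieltjesFunction_eq]
    exact rightLim_eq_of_tendsto
      (((continuous_const.mul continuous_id).sub hg.continuous).continuousAt.continuousWithinAt)
  set ρ : ℝ → ℝ := fun t => (S.measure.rnDeriv volume t).toReal with hρ
  have hSm : S.measure (Ioc u v) = ENNReal.ofReal (h v - h u) := by
    rw [S.measure_Ioc, hSe, hSe]
  have h1 : ∫ t in Ioc u v, ρ t ≤ h v - h u := by
    have := Measure.setIntegral_toReal_rnDeriv_le (μ := S.measure) (ν := volume)
      (s := Ioc u v) (by rw [hSm]; exact ENNReal.ofReal_ne_top)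
    rw [measureReal_def, hSm, ENNReal.toReal_ofReal (by have := hmono huv; simpa [h] using this)] at this
    exact this
  have hder := hmono.ae_hasDerivAt
  have hae : ∀ᵐ t ∂(volume.restrict (Ioc u v)), (K : ℝ) - |deriv g t| ≤ ρ t := by
    refine ae_restrict_of_ae ?_
    filter_upwards [hder] with t ht
    have hgd : HasDerivAt g ((K : ℝ) - ρ t) t := by
      have h' : HasDerivAt (fun s => (K : ℝ) * s - h s) ((K : ℝ) * 1 - ρ t) t :=
        ((hasDerivAt_id t).const_mul (K : ℝ)).sub ht
      have : (fun s => (K : ℝ) * s - h s) = g := by funext s; simp [h]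
      rw [this, mul_one] at h'
      exact h'
    have hde : deriv g t = (K : ℝ) - ρ t := hgd.deriv
    have habs : (K : ℝ) - ρ t ≤ |deriv g t| := by rw [hde]; exact le_abs_self _
    linarith
  have hintabs : IntegrableOn (fun t => |deriv g t|) (Ioc u v) :=
    lip_abs_deriv_integrableOn g K hg (measure_Ioc_lt_top).ne
  have hintc : IntegrableOn (fun _ : ℝ => (K : ℝ)) (Ioc u v) :=
    integrableOn_const measure_Ioc_lt_top.ne
  have hint2 : IntegrableOn ρ (Ioc u v) volume :=
    Measure.integrableOn_toReal_rnDeriv (by rw [hSm]; exact ENNReal.ofReal_ne_top)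
  have h4 : ∫ t in Ioc u v, ((K : ℝ) - |deriv g t|) ≤ ∫ t in Ioc u v, ρ t :=
    setIntegral_mono_ae_restrict (hintc.sub hintabs) hint2 hae
  rw [integral_sub hintc hintabs, setIntegral_const] at h4
  have hme : volume.real (Ioc u v) = v - u := by
    rw [measureReal_def, Real.volume_Ioc, ENNReal.toReal_ofReal (by linarith)]
  rw [hme, smul_eq_mul] at h4
  have hfin : h v - h u = (K : ℝ) * (v - u) - (g v - g u) := by simp [h]; ring
  linarith [le_trans h4 h1, hfin ▸ (le_trans h4 h1)]

lemma lip_abs_sub_le_integral (g : ℝ → ℝ) (K : ℝ≥0) (hg : LipschitzWith K g)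
    {u v : ℝ} (huv : u ≤ v) : |g v - g u| ≤ ∫ t in Ioc u v, |deriv g t| := by
  rw [abs_le]
  refine ⟨?_, lip_sub_le_integral g K hg huv⟩
  have hneg := lip_sub_le_integral (fun t => -g t) K hg.neg huv
  simp only [neg_sub_neg] at hneg
  have hd : ∀ t, |deriv (fun s => -g s) t| = |deriv g t| := by
    intro t; rw [deriv.fun_neg]; exact abs_neg _
  simp_rw [hd] at hneg
  linarith

lemma wr_integrableOn (lam : ℝ) (hlam : -1/2 < lam) (a b : ℝ) (hab : a ≤ b) :
    IntegrableOn (fun t : ℝ => t ^ (2*lam)) (Ioo a b) volume := by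
  have h : IntervalIntegrable (fun t : ℝ => t ^ (2*lam)) volume a b :=
    intervalIntegral.intervalIntegrable_rpow' (by linarith)
  exact ((intervalIntegrable_iff_integrableOn_Ioc_of_le hab).1 h).mono_set Ioo_subset_Ioc_self

lemma conv_aux (lam : ℝ) (a b : ℝ) (ha : 0 ≤ a) (φ : ℝ → ℝ) :
    ∫ y in Ioo a b, φ y ∂(volume.withDensity fun t => ENNReal.ofReal (t ^ (2 * lam)))
      = ∫ y in Ioo a b, (y ^ (2*lam)) * φ y ∂volume := by
  have hmeas : Measurable (fun t : ℝ => (t ^ (2*lam)).toNNReal) := by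
    have : Measurable fun t : ℝ => t ^ (2*lam) := by fun_prop
    exact this.real_toNNReal
  have h0 : (volume.withDensity fun t => ENNReal.ofReal (t ^ (2 * lam)))
      = volume.withDensity (fun t => ((t ^ (2*lam)).toNNReal : ℝ≥0∞)) := rfl
  rw [h0, setIntegral_withDensity_eq_setIntegral_smul hmeas φ measurableSet_Ioo]
  refine setIntegral_congr_fun measurableSet_Ioo (fun y hy => ?_)
  have hy0 : (0:ℝ) < y := lt_of_le_of_lt ha hy.1
  rw [NNReal.smul_def, Real.coe_toNNReal _ (Real.rpow_nonneg hy0.le _), smul_eq_mul]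


/-- Poincaré-type inequality for the one-dimensional Bessel measure `x^{2λ} dx` on `(a,b)`:
for every Lipschitz function `f` on `(a,b)`,
`⨍⨍ |f(x) − f(y)| dμ_λ dμ_λ ≤ 2(b−a) ⨍ |f′| dμ_λ`. -/
theorem bessel_poincare_one_dim (lam : ℝ) (hlam : -1/2 < lam)
    (a b : ℝ) (ha : 0 ≤ a) (hab : a < b)
    (f : ℝ → ℝ) (K : ℝ≥0) (hf : LipschitzOnWith K f (Set.Ioo a b)) :
    (⨍ x in Set.Ioo a b,
        (⨍ y in Set.Ioo a b, |f x - f y|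
          ∂(MeasureTheory.volume.withDensity fun t => ENNReal.ofReal (t ^ (2 * lam))))
        ∂(MeasureTheory.volume.withDensity fun t => ENNReal.ofReal (t ^ (2 * lam))))
      ≤ 2 * (b - a) *
        ⨍ z in Set.Ioo a b, |derivWithin f (Set.Ioo a b) z|
          ∂(MeasureTheory.volume.withDensity fun t => ENNReal.ofReal (t ^ (2 * lam))) := by
  set ν : Measure ℝ := volume.withDensity fun t => ENNReal.ofReal (t ^ (2 * lam)) with hν
  set wr : ℝ → ℝ := fun t => t ^ (2*lam) with hwr
  -- basic facts about the weight
  have hwr_int : IntegrableOn wr (Ioo a b) volume := wr_integrableOn lam hlam a b hab.le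
  have hwr_nonneg : ∀ y ∈ Ioo a b, 0 ≤ wr y := fun y hy =>
    Real.rpow_nonneg (le_of_lt (lt_of_le_of_lt ha hy.1)) _
  have hwr_pos : ∀ y ∈ Ioo a b, 0 < wr y := fun y hy =>
    Real.rpow_pos_of_pos (lt_of_le_of_lt ha hy.1) _
  -- the mass of the interval
  have hν_Ioo : ν (Ioo a b) = ENNReal.ofReal (∫ t in Ioo a b, wr t) := by
    rw [hν, withDensity_apply _ measurableSet_Ioo,
      ← ofReal_integral_eq_lintegral_ofReal hwr_int
        ((ae_restrict_mem measurableSet_Ioo).mono (fun y hy => hwr_nonneg y hy))]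
  set m : ℝ := ∫ t in Ioo a b, wr t with hm
  have hm_pos : 0 < m := by
    rw [hm]
    rw [setIntegral_pos_iff_support_of_nonneg_ae
      ((ae_restrict_mem measurableSet_Ioo).mono (fun y hy => hwr_nonneg y hy)) hwr_int]
    have hsub : Ioo a b ⊆ Function.support wr ∩ Ioo a b :=
      fun y hy => ⟨(hwr_pos y hy).ne', hy⟩
    calc (0:ℝ≥0∞) < ENNReal.ofReal (b - a) := by
          simp [ENNReal.ofReal_pos, sub_pos.2 hab]
      _ = volume (Ioo a b) := (Real.volume_Ioo).symm
      _ ≤ volume (Function.support wr ∩ Ioo a b) := measure_mono hsub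
  have hM : ν.real (Ioo a b) = m := by
    rw [measureReal_def, hν_Ioo, ENNReal.toReal_ofReal hm_pos.le]
  have hν_fin : ν (Ioo a b) ≠ ⊤ := by rw [hν_Ioo]; exact ENNReal.ofReal_ne_top
  haveI hfin : IsFiniteMeasure (ν.restrict (Ioo a b)) :=
    ⟨by rw [Measure.restrict_apply_univ]; exact hν_fin.lt_top⟩
  -- Lipschitz extension
  obtain ⟨g, hgl, hgf⟩ := hf.extend_real
  have hfg : ∀ y ∈ Ioo a b, f y = g y := fun y hy => hgf hy
  have hgcont : Continuous g := hgl.continuous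
  -- derivative identification
  have hderiv_eq : ∀ z ∈ Ioo a b, derivWithin f (Ioo a b) z = deriv g z := by
    intro z hz
    rw [derivWithin_of_isOpen isOpen_Ioo hz]
    exact Filter.EventuallyEq.deriv_eq
      (Filter.eventuallyEq_of_mem (isOpen_Ioo.mem_nhds hz) hfg)
  -- the comparison point
  set c : ℝ := if 0 ≤ lam then g b else g a with hc
  -- the Lebesgue-weighted derivative integral
  set Dleb : ℝ := ∫ t in Ioo a b, wr t * |deriv g t| ∂volume with hDleb
  have hwr_meas : Measurable wr := by fun_prop
  have habs_int : ∀ s : Set ℝ, volume s ≠ ⊤ → IntegrableOn (fun t => |deriv g t|) s :=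
    fun s hs => lip_abs_deriv_integrableOn g K hgl hs
  have hwr_int' : IntegrableOn wr (Ioc a b) volume :=
    (intervalIntegrable_iff_integrableOn_Ioc_of_le hab.le).1
      (intervalIntegral.intervalIntegrable_rpow' (by linarith))
  have hD_int : IntegrableOn (fun t => wr t * |deriv g t|) (Ioo a b) volume := by
    refine Integrable.mono' (hwr_int.const_mul (K : ℝ)) ?_ ?_
    · exact (hwr_meas.mul (measurable_deriv g).abs).aestronglyMeasurable
    · filter_upwards [ae_restrict_mem measurableSet_Ioo] with t ht
      rw [Real.norm_eq_abs, abs_mul, abs_of_nonneg (hwr_nonneg t ht), abs_abs]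
      calc wr t * |deriv g t| ≤ wr t * (K : ℝ) :=
            mul_le_mul_of_nonneg_left (lip_deriv_bdd g K hgl t) (hwr_nonneg t ht)
        _ = (K : ℝ) * wr t := mul_comm _ _
  have hD_nonneg : 0 ≤ Dleb := by
    refine setIntegral_nonneg measurableSet_Ioo (fun t ht => ?_)
    exact mul_nonneg (hwr_nonneg t ht) (abs_nonneg _)
  -- key pointwise bound
  have hkey : ∀ y ∈ Ioo a b, wr y * |f y - c| ≤ Dleb := by
    intro y hy
    have hy0 : (0:ℝ) < y := lt_of_le_of_lt ha hy.1
    by_cases hl : 0 ≤ lam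
    · -- increasing weight, compare with the right endpoint
      have hc' : c = g b := by rw [hc, if_pos hl]
      have h1 : |f y - c| ≤ ∫ t in Ioc y b, |deriv g t| := by
        rw [hc', hfg y hy, ← abs_sub_comm]
        exact lip_abs_sub_le_integral g K hgl hy.2.le
      have h2 : wr y * |f y - c| ≤ ∫ t in Ioc y b, wr y * |deriv g t| := by
        calc wr y * |f y - c| ≤ wr y * ∫ t in Ioc y b, |deriv g t| :=
              mul_le_mul_of_nonneg_left h1 (hwr_nonneg y hy)
          _ = ∫ t in Ioc y b, wr y * |deriv g t| := (integral_const_mul _ _).symm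
      have h3 : ∫ t in Ioc y b, wr y * |deriv g t| ≤ ∫ t in Ioc y b, wr t * |deriv g t| := by
        refine setIntegral_mono_on
          ((habs_int _ measure_Ioc_lt_top.ne).const_mul _)
          (((hwr_int'.mono_set (Ioc_subset_Ioc_left hy.1.le))).bdd_mul (c := (K:ℝ))
            (measurable_deriv g).abs.aestronglyMeasurable
            (Filter.Eventually.of_forall fun t => by simpa using lip_deriv_bdd g K hgl t) |>.congr
            (Filter.EventuallyEq.of_eq (funext fun t => mul_comm _ _)))
          measurableSet_Ioc (fun t ht => ?_)
        exact mul_le_mul_of_nonneg_right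
          (Real.rpow_le_rpow hy0.le ht.1.le (by linarith)) (abs_nonneg _)
      have h4 : ∫ t in Ioc y b, wr t * |deriv g t| ≤ Dleb := by
        rw [integral_Ioc_eq_integral_Ioo]
        exact setIntegral_mono_set hD_int
          ((ae_restrict_mem measurableSet_Ioo).mono
            (fun t ht => mul_nonneg (hwr_nonneg t ht) (abs_nonneg _)))
          (HasSubset.Subset.eventuallyLE (Ioo_subset_Ioo hy.1.le le_rfl))
      linarith
    · -- decreasing weight, compare with the left endpoint
      push_neg at hl
      have hc' : c = g a := by rw [hc, if_neg (not_le.2 hl)]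
      have h1 : |f y - c| ≤ ∫ t in Ioc a y, |deriv g t| := by
        rw [hc', hfg y hy]
        exact lip_abs_sub_le_integral g K hgl hy.1.le
      have h2 : wr y * |f y - c| ≤ ∫ t in Ioc a y, wr y * |deriv g t| := by
        calc wr y * |f y - c| ≤ wr y * ∫ t in Ioc a y, |deriv g t| :=
              mul_le_mul_of_nonneg_left h1 (hwr_nonneg y hy)
          _ = ∫ t in Ioc a y, wr y * |deriv g t| := (integral_const_mul _ _).symm
      have h3 : ∫ t in Ioc a y, wr y * |deriv g t| ≤ ∫ t in Ioc a y, wr t * |deriv g t| := by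
        refine setIntegral_mono_on
          ((habs_int _ measure_Ioc_lt_top.ne).const_mul _)
          (((hwr_int'.mono_set (Ioc_subset_Ioc_right hy.2.le))).bdd_mul (c := (K:ℝ))
            (measurable_deriv g).abs.aestronglyMeasurable
            (Filter.Eventually.of_forall fun t => by simpa using lip_deriv_bdd g K hgl t) |>.congr
            (Filter.EventuallyEq.of_eq (funext fun t => mul_comm _ _)))
          measurableSet_Ioc (fun t ht => ?_)
        have ht0 : (0:ℝ) < t := lt_of_le_of_lt ha ht.1
        exact mul_le_mul_of_nonneg_right
          (Real.rpow_le_rpow_of_nonpos ht0 ht.2 (by linarith)) (abs_nonneg _)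
      have h4 : ∫ t in Ioc a y, wr t * |deriv g t| ≤ Dleb := by
        rw [integral_Ioc_eq_integral_Ioo]
        exact setIntegral_mono_set hD_int
          ((ae_restrict_mem measurableSet_Ioo).mono
            (fun t ht => mul_nonneg (hwr_nonneg t ht) (abs_nonneg _)))
          (HasSubset.Subset.eventuallyLE (Ioo_subset_Ioo le_rfl hy.2.le))
      linarith
  -- bound on |g y - c| on the interval
  have hgc_bdd : ∀ y ∈ Ioo a b, |g y - c| ≤ (K:ℝ) * (b - a) := by
    intro y hy
    by_cases hl : 0 ≤ lam
    · rw [hc, if_pos hl]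
      have := hgl.dist_le_mul y b
      rw [Real.dist_eq, Real.dist_eq] at this
      refine this.trans (mul_le_mul_of_nonneg_left
        (abs_le.2 ⟨by linarith [hy.1, hy.2], by linarith [hy.1, hy.2]⟩) K.coe_nonneg)
    · rw [hc, if_neg hl]
      have := hgl.dist_le_mul y a
      rw [Real.dist_eq, Real.dist_eq] at this
      refine this.trans (mul_le_mul_of_nonneg_left
        (abs_le.2 ⟨by linarith [hy.1, hy.2], by linarith [hy.1, hy.2]⟩) K.coe_nonneg)
  -- the integral of |f - c| against ν
  set E : ℝ := ∫ y in Ioo a b, |f y - c| ∂ν with hE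
  have hE_le : E ≤ (b - a) * Dleb := by
    rw [hE, hν, conv_aux lam a b ha]
    calc ∫ y in Ioo a b, wr y * |f y - c| ∂volume
        ≤ ∫ _ in Ioo a b, Dleb ∂volume := by
          refine setIntegral_mono_on ?_
            (integrableOn_const measure_Ioo_lt_top.ne) measurableSet_Ioo hkey
          refine Integrable.mono' (hwr_int.const_mul ((K:ℝ) * (b - a))) ?_ ?_
          · have ha1 : AEStronglyMeasurable (fun y => wr y * |g y - c|)
                (volume.restrict (Ioo a b)) :=
              (hwr_meas.mul ((hgcont.sub continuous_const).abs.measurable)).aestronglyMeasurable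
            refine ha1.congr ?_
            filter_upwards [ae_restrict_mem measurableSet_Ioo] with y hy
            rw [hfg y hy]
          · filter_upwards [ae_restrict_mem measurableSet_Ioo] with y hy
            rw [Real.norm_eq_abs, abs_mul, abs_of_nonneg (hwr_nonneg y hy), abs_abs, hfg y hy]
            calc wr y * |g y - c| ≤ wr y * ((K:ℝ) * (b - a)) :=
                  mul_le_mul_of_nonneg_left (hgc_bdd y hy) (hwr_nonneg y hy)
              _ = (K:ℝ) * (b - a) * wr y := mul_comm _ _
      _ = (b - a) * Dleb := by
          rw [setIntegral_const, smul_eq_mul, Real.volume_real_Ioo_of_le hab.le]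
  have hE_nonneg : 0 ≤ E :=
    setIntegral_nonneg measurableSet_Ioo (fun y _ => abs_nonneg _)
  -- identification of the ν-integral of the derivative
  have hDeq : ∫ z in Ioo a b, |derivWithin f (Ioo a b) z| ∂ν = Dleb := by
    rw [hν, conv_aux lam a b ha, hDleb]
    refine setIntegral_congr_fun measurableSet_Ioo (fun z hz => ?_)
    rw [hderiv_eq z hz]
  -- integrability of |f · - c| against ν
  have hintE : Integrable (fun y => |f y - c|) (ν.restrict (Ioo a b)) := by
    refine Integrable.mono' (integrable_const ((K:ℝ) * (b - a))) ?_ ?_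
    · have ha1 : AEStronglyMeasurable (fun y => |g y - c|) (ν.restrict (Ioo a b)) :=
        (hgcont.sub continuous_const).abs.aestronglyMeasurable
      refine ha1.congr ?_
      filter_upwards [ae_restrict_mem measurableSet_Ioo] with y hy
      rw [hfg y hy]
    · filter_upwards [ae_restrict_mem measurableSet_Ioo] with y hy
      rw [Real.norm_eq_abs, abs_abs, hfg y hy]
      exact hgc_bdd y hy
  -- inner bound
  have hInner : ∀ x ∈ Ioo a b,
      ∫ y in Ioo a b, |f x - f y| ∂ν ≤ |f x - c| * m + E := by
    intro x hx
    have hint_xy : Integrable (fun y => |f x - f y|) (ν.restrict (Ioo a b)) := by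
      refine Integrable.mono' (integrable_const ((K:ℝ) * (b - a))) ?_ ?_
      · have ha1 : AEStronglyMeasurable (fun y => |f x - g y|) (ν.restrict (Ioo a b)) :=
          (continuous_const.sub hgcont).abs.aestronglyMeasurable
        refine ha1.congr ?_
        filter_upwards [ae_restrict_mem measurableSet_Ioo] with y hy
        rw [hfg y hy]
      · filter_upwards [ae_restrict_mem measurableSet_Ioo] with y hy
        rw [Real.norm_eq_abs, abs_abs, hfg y hy, hfg x hx]
        have := hgl.dist_le_mul x y
        rw [Real.dist_eq, Real.dist_eq] at this
        refine this.trans (mul_le_mul_of_nonneg_left ?_ K.coe_nonneg)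
        rw [abs_le]
        constructor <;> [linarith [hx.1, hx.2, hy.1, hy.2]; linarith [hx.1, hx.2, hy.1, hy.2]]
    calc ∫ y in Ioo a b, |f x - f y| ∂ν
        ≤ ∫ y in Ioo a b, (|f x - c| + |f y - c|) ∂ν := by
          refine integral_mono hint_xy ((integrable_const _).add hintE) (fun y => ?_)
          calc |f x - f y| ≤ |f x - c| + |c - f y| := abs_sub_le _ _ _
            _ = |f x - c| + |f y - c| := by rw [abs_sub_comm c]
      _ = |f x - c| * m + E := by
          rw [integral_add (integrable_const _) hintE, setIntegral_const, smul_eq_mul, hM,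
            mul_comm]
  -- assemble everything
  rw [setAverage_eq, setAverage_eq, hM, hDeq, smul_eq_mul, smul_eq_mul]
  have hOuter : ∫ x in Ioo a b, (⨍ y in Ioo a b, |f x - f y| ∂ν) ∂ν ≤ 2 * E := by
    have hstep : ∫ x in Ioo a b, (⨍ y in Ioo a b, |f x - f y| ∂ν) ∂ν
        ≤ ∫ x in Ioo a b, m⁻¹ * (|f x - c| * m + E) ∂ν := by
      refine integral_mono_of_nonneg ?_ ?_ ?_
      · refine Filter.Eventually.of_forall (fun x => ?_)
        simp only [Pi.zero_apply]
        rw [setAverage_eq, hM, smul_eq_mul]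
        exact mul_nonneg (inv_nonneg.2 hm_pos.le)
          (setIntegral_nonneg measurableSet_Ioo (fun y _ => abs_nonneg _))
      · exact (((hintE.mul_const m).add (integrable_const E)).const_mul _)
      · filter_upwards [ae_restrict_mem measurableSet_Ioo] with x hx
        rw [setAverage_eq, hM, smul_eq_mul]
        exact mul_le_mul_of_nonneg_left (hInner x hx) (inv_nonneg.2 hm_pos.le)
    refine hstep.trans ?_
    rw [integral_const_mul, integral_add (hintE.mul_const m) (integrable_const E),
      integral_mul_const, setIntegral_const, smul_eq_mul, hM]
    rw [← hE, inv_mul_le_iff₀ hm_pos]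
    nlinarith [hE_nonneg, hm_pos]
  calc m⁻¹ * ∫ x in Ioo a b, (⨍ y in Ioo a b, |f x - f y| ∂ν) ∂ν
      ≤ m⁻¹ * (2 * E) := mul_le_mul_of_nonneg_left hOuter (inv_nonneg.2 hm_pos.le)
    _ ≤ m⁻¹ * (2 * ((b - a) * Dleb)) := by
        refine mul_le_mul_of_nonneg_left ?_ (inv_nonneg.2 hm_pos.le)
        linarith
    _ = 2 * (b - a) * (m⁻¹ * Dleb) := by ring
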